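/- Let κ be an infinite cardinal and let Q be a directed set carrying a Hausdorff topology such that: Q is locally compact; every closed discrete subset of Q has cardinality at most κ; and every compact subset of Q has an upper bound in Q. Then Q has calibre (κ⁺, ω), where κ⁺ is the successor cardinal of κ. -/

import Mathlib

open Set Topology Cardinal Filter

universe u

/-- A directed set `P` has calibre `(μ, ω)` if every subset of cardinality `μ`
has an infinite subset with an upper bound. -/
def Calibre (P : Type u) [Preorder P] (μ : Cardinal.{u}) : Prop :=
  ∀ S : Set P, #S = μ → ∃ T ⊆ S, T.Infinite ∧ BddAbove T

/-- A locally compact Hausdorff directed set with extent at most `κ` in which every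
compact set is bounded has calibre `(κ⁺, ω)`. -/
theorem stmt7 {Q : Type u} [Preorder Q] [TopologicalSpace Q] [T2Space Q]
    [LocallyCompactSpace Q]
    (hdir : ∀ S : Set Q, S.Finite → BddAbove S)
    (κ : Cardinal.{u}) (hκ : ℵ₀ ≤ κ)
    (hext : ∀ S : Set Q, IsClosed S → DiscreteTopology S → #S ≤ κ)
    (hKSB : ∀ K : Set Q, IsCompact K → BddAbove K) :
    Calibre Q (Order.succ κ) := by
  intro S hS
  -- S is not closed discrete, so it has an accumulation point
  have hnotcd : ¬ (IsClosed S ∧ DiscreteTopology S) := by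
    rintro ⟨h1, h2⟩
    have := hext S h1 h2
    rw [hS] at this
    exact absurd this (not_le.mpr (Order.lt_succ κ))
  rw [← isDiscrete_iff_discreteTopology, isClosed_and_discrete_iff] at hnotcd
  push_neg at hnotcd
  obtain ⟨x, hx⟩ := hnotcd
  have hacc : AccPt x (𝓟 S) := by
    rw [AccPt, Filter.neBot_iff]
    exact fun h => hx (disjoint_iff.mpr h)
  obtain ⟨K, hKc, hKn⟩ := exists_compact_mem_nhds x
  have hacc' : AccPt x (𝓟 (K ∩ S)) := hacc.nhds_inter hKn
  refine ⟨K ∩ S, inter_subset_right, ?_, (hKSB K hKc).mono inter_subset_left⟩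
  intro hfin
  have hfs : Finite ↑(K ∩ S) := hfin.to_subtype
  have hcd : IsClosed (K ∩ S) ∧ DiscreteTopology ↑(K ∩ S) := ⟨hfin.isClosed, inferInstance⟩
  rw [← isDiscrete_iff_discreteTopology, isClosed_and_discrete_iff] at hcd
  exact hacc'.ne (disjoint_iff.mp (hcd x))
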